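/- Let p_1, …, p_n : [β,∞) → B(X) and q : [β,∞) → X be continuous, and for i = 1,…,n let τ_i : [β,∞) → ℝ be continuous with α ≤ τ_i(t) ≤ t for all t ∈ [β,∞). Then there exists exactly one function x : [α,∞) → X such that x is continuous on [α,∞), x(t) = φ(t) for all t ∈ [α,β], and x is differentiable on [β,∞) with x′(t) = Σ_{i=1}^{n} p_i(t) x(τ_i(t)) + q(t) for all t ∈ [β,∞). -/

import Mathlib

open Set MeasureTheory intervalIntegral Function

theorem delay_integrand_continuousOn
    {X : Type*} [NormedAddCommGroup X] [NormedSpace ℝ X]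
    {n : ℕ} {τ : Fin n → ℝ → ℝ} {p : Fin n → ℝ → X →L[ℝ] X} {q : ℝ → X}
    {J S : Set ℝ} {x : ℝ → X}
    (hp : ∀ i, ContinuousOn (p i) J) (hq : ContinuousOn q J)
    (hτc : ∀ i, ContinuousOn (τ i) J) (hmaps : ∀ i, MapsTo (τ i) J S)
    (hx : ContinuousOn x S) :
    ContinuousOn (fun s => (∑ i, p i s (x (τ i s))) + q s) J := by
  refine ContinuousOn.add ?_ hq
  refine continuousOn_finset_sum _ fun i _ => ?_
  exact (hp i).clm_apply ((hx.comp (hτc i) (hmaps i)))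

theorem delay_key
    {X : Type*} [NormedAddCommGroup X] [NormedSpace ℝ X] [CompleteSpace X]
    {n : ℕ} {α β T : ℝ} (hαβ : α ≤ β) (hβT : β ≤ T)
    (τ : Fin n → ℝ → ℝ) (hτc : ∀ i, ContinuousOn (τ i) (Icc β T))
    (hτ : ∀ i, ∀ t ∈ Icc β T, α ≤ τ i t ∧ τ i t ≤ t)
    (φ : ℝ → X) (hφ : ContinuousOn φ (Icc α β))
    (p : Fin n → ℝ → X →L[ℝ] X) (hp : ∀ i, ContinuousOn (p i) (Icc β T))
    (q : ℝ → X) (hq : ContinuousOn q (Icc β T)) :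
    ∃ x : ℝ → X,
      (ContinuousOn x (Icc α T) ∧ (∀ t ∈ Icc α β, x t = φ t) ∧
        ∀ t ∈ Icc β T, x t = φ β + ∫ s in β..t, ((∑ i, p i s (x (τ i s))) + q s)) ∧
      ∀ y : ℝ → X, (ContinuousOn y (Icc α T) ∧ (∀ t ∈ Icc α β, y t = φ t) ∧
        ∀ t ∈ Icc β T, y t = φ β + ∫ s in β..t, ((∑ i, p i s (y (τ i s))) + q s)) →
        EqOn y x (Icc α T) := by
  have hαT : α ≤ T := hαβ.trans hβT
  -- bound on the operator norms
  obtain ⟨M, hM0, hM⟩ : ∃ M, 0 ≤ M ∧ ∀ s ∈ Icc β T, (∑ i, ‖p i s‖) ≤ M := by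
    obtain ⟨C, hC⟩ := isCompact_Icc.exists_bound_of_continuousOn
      (f := fun s => ∑ i, ‖p i s‖) (continuousOn_finset_sum _ fun i _ => (hp i).norm)
    exact ⟨max C 0, le_max_right _ _, fun s hs =>
      le_trans (le_abs_self _) (le_trans (by simpa using hC s hs) (le_max_left _ _))⟩
  -- the fixed point space
  have hne : Nonempty (Icc α T) := ⟨⟨α, le_rfl, hαT⟩⟩
  -- integrand for maps on the interval
  set G : (Icc α T → X) → ℝ → X :=
    fun f s => (∑ i, p i s (f (projIcc α T hαT (τ i s)))) + q s with hGdef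
  have hτmem : ∀ i, ∀ s ∈ Icc β T, τ i s ∈ Icc α T :=
    fun i s hs => ⟨(hτ i s hs).1, le_trans (hτ i s hs).2 hs.2⟩
  have hGc : ∀ f : C(Icc α T, X), ContinuousOn (G f) (Icc β T) := by
    intro f
    refine ContinuousOn.add ?_ hq
    refine continuousOn_finset_sum _ fun i _ => ?_
    refine (hp i).clm_apply ?_
    exact ((f.continuous.comp continuous_projIcc).comp_continuousOn (hτc i))
  have hGint : ∀ (f : C(Icc α T, X)) (u : ℝ), u ∈ Icc β T →
      IntervalIntegrable (G f) volume β u := by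
    intro f u hu
    apply ContinuousOn.intervalIntegrable
    rw [uIcc_of_le hu.1]
    exact (hGc f).mono (Icc_subset_Icc le_rfl hu.2)
  have cont : ∀ f : C(Icc α T, X),
      Continuous fun t : Icc α T =>
        φ (min ↑t β) + ∫ s in β..(max ↑t β), G f s := by
    intro f
    refine Continuous.add ?_ ?_
    · refine hφ.comp_continuous (continuous_subtype_val.min continuous_const) fun t => ?_
      exact ⟨le_min t.2.1 hαβ, min_le_right _ _⟩
    · have hI : ContinuousOn (fun u => ∫ s in β..u, G f s) (Icc β T) := by
        have := continuousOn_primitive_interval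
          (f := G f) (μ := volume) (a := β) (b := T)
          (((hGc f).mono (by rw [uIcc_of_le hβT])).integrableOn_compact
            (by rw [uIcc_of_le hβT]; exact isCompact_Icc))
        rwa [uIcc_of_le hβT] at this
      exact hI.comp_continuous (continuous_subtype_val.max continuous_const)
        fun t => ⟨le_max_right _ _, max_le t.2.2 hβT⟩
  set Φ : C(Icc α T, X) → C(Icc α T, X) := fun f => ⟨_, cont f⟩ with hΦdef
  have hΦ : ∀ (f : C(Icc α T, X)) (t : Icc α T),
      Φ f t = φ (min ↑t β) + ∫ s in β..(max ↑t β), G f s := fun f t => rfl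
  -- difference of integrands
  have hGsub : ∀ (f g : C(Icc α T, X)) (s : ℝ),
      G f s - G g s = ∑ i, p i s (f (projIcc α T hαT (τ i s)) - g (projIcc α T hαT (τ i s))) := by
    intro f g s
    simp [hGdef, Finset.sum_sub_distrib]
  -- difference of Φ-values
  have hΦsub : ∀ (f g : C(Icc α T, X)) (t : Icc α T),
      Φ f t - Φ g t = ∫ s in β..(max ↑t β), (G f s - G g s) := by
    intro f g t
    rw [hΦ, hΦ, intervalIntegral.integral_sub
      (hGint f _ ⟨le_max_right _ _, max_le t.2.2 hβT⟩)
      (hGint g _ ⟨le_max_right _ _, max_le t.2.2 hβT⟩)]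
    abel
  -- pointwise bound on the difference of integrands
  have hGbound : ∀ (f g : C(Icc α T, X)) (C : ℝ) (k : ℕ), 0 ≤ C →
      (∀ t : Icc α T, ‖f t - g t‖ ≤ C * (M ^ k * max (↑t - β) 0 ^ k / k.factorial)) →
      ∀ s ∈ Icc β T, ‖G f s - G g s‖ ≤ M * (C * (M ^ k * max (s - β) 0 ^ k / k.factorial)) := by
    intro f g C k hC hfg s hs
    rw [hGsub]
    calc ‖∑ i, p i s (f (projIcc α T hαT (τ i s)) - g (projIcc α T hαT (τ i s)))‖
        ≤ ∑ i, ‖p i s (f (projIcc α T hαT (τ i s)) - g (projIcc α T hαT (τ i s)))‖ :=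
          norm_sum_le _ _
      _ ≤ ∑ i, ‖p i s‖ * (C * (M ^ k * max (s - β) 0 ^ k / k.factorial)) := by
          refine Finset.sum_le_sum fun i _ => ?_
          refine le_trans ((p i s).le_opNorm _) ?_
          refine mul_le_mul_of_nonneg_left ?_ (norm_nonneg _)
          refine le_trans (hfg _) ?_
          have h1 : (projIcc α T hαT (τ i s) : ℝ) = τ i s := by
            rw [projIcc_of_mem hαT (hτmem i s hs)]
          rw [h1]
          have h2 : max (τ i s - β) 0 ≤ max (s - β) 0 :=
            max_le_max (by linarith [(hτ i s hs).2]) le_rfl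
          gcongr
      _ = (∑ i, ‖p i s‖) * (C * (M ^ k * max (s - β) 0 ^ k / k.factorial)) := by
          rw [Finset.sum_mul]
      _ ≤ M * (C * (M ^ k * max (s - β) 0 ^ k / k.factorial)) := by
          refine mul_le_mul_of_nonneg_right (hM s hs) ?_
          exact mul_nonneg hC (div_nonneg (mul_nonneg (pow_nonneg hM0 _)
            (pow_nonneg (le_max_right _ _) _)) (Nat.cast_nonneg _))
  -- main iterate estimate
  have hiter : ∀ (k : ℕ) (f g : C(Icc α T, X)) (t : Icc α T),
      ‖(Φ^[k] f) t - (Φ^[k] g) t‖ ≤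
        ‖f - g‖ * (M ^ k * max (↑t - β) 0 ^ k / k.factorial) := by
    intro k
    induction k with
    | zero =>
      intro f g t
      simpa using (f - g).norm_coe_le_norm t
    | succ k ih =>
      intro f g t
      have hnn : (0:ℝ) ≤ ‖f - g‖ * (M ^ (k+1) * max (↑t - β) 0 ^ (k+1) / (k+1).factorial) :=
        mul_nonneg (norm_nonneg _) (div_nonneg (mul_nonneg (pow_nonneg hM0 _)
          (pow_nonneg (le_max_right _ _) _)) (Nat.cast_nonneg _))
      rw [iterate_succ_apply', iterate_succ_apply']
      rcases le_total (↑t : ℝ) β with ht | ht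
      · have hmax : max (↑t : ℝ) β = β := max_eq_right ht
        rw [hΦsub, hmax, intervalIntegral.integral_same]
        simp only [norm_zero]
        exact hnn
      · have hmax : max (↑t : ℝ) β = ↑t := max_eq_left ht
        have htT : (↑t : ℝ) ∈ Icc β T := ⟨ht, t.2.2⟩
        rw [hΦsub, hmax, max_eq_left (show (0:ℝ) ≤ (↑t : ℝ) - β by linarith)]
        have hGc' : ContinuousOn (fun s => G (Φ^[k] f) s - G (Φ^[k] g) s) (Icc β T) :=
          (hGc _).sub (hGc _)
        have hb := hGbound (Φ^[k] f) (Φ^[k] g) ‖f - g‖ k (norm_nonneg _) (ih f g)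
        calc ‖∫ s in β..(↑t : ℝ), (G (Φ^[k] f) s - G (Φ^[k] g) s)‖
            ≤ ∫ s in β..(↑t : ℝ), ‖G (Φ^[k] f) s - G (Φ^[k] g) s‖ :=
              intervalIntegral.norm_integral_le_integral_norm ht
          _ ≤ ∫ s in β..(↑t : ℝ),
                M * (‖f - g‖ * (M ^ k * max (s - β) 0 ^ k / k.factorial)) := by
              refine intervalIntegral.integral_mono_on ht ?_ ?_
                (fun s hs => hb s ⟨hs.1, le_trans hs.2 t.2.2⟩)
              · apply ContinuousOn.intervalIntegrable
                rw [uIcc_of_le ht]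
                exact (hGc'.mono (Icc_subset_Icc le_rfl htT.2)).norm
              · apply Continuous.intervalIntegrable
                fun_prop
          _ = ∫ s in β..(↑t : ℝ),
                M * (‖f - g‖ * (M ^ k * (s - β) ^ k / k.factorial)) := by
              refine intervalIntegral.integral_congr fun s hs => ?_
              rw [uIcc_of_le ht] at hs
              rw [max_eq_left (by linarith [hs.1])]
          _ = ‖f - g‖ * (M ^ (k+1) * (↑t - β) ^ (k+1) / (k+1).factorial) := by
              have h0 : ∫ s in β..(↑t : ℝ), (s - β) ^ k = (↑t - β) ^ (k+1) / (k+1) := by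
                rw [intervalIntegral.integral_comp_sub_right (fun s => s ^ k) β]
                simp [integral_pow]
              have h1 : (fun s : ℝ => M * (‖f - g‖ * (M ^ k * (s - β) ^ k / k.factorial)))
                  = fun s : ℝ => (M * ‖f - g‖ * M ^ k / k.factorial) * (s - β) ^ k := by
                funext s; ring
              rw [h1, intervalIntegral.integral_const_mul, h0, Nat.factorial_succ]
              have hk : (k.factorial : ℝ) ≠ 0 := Nat.cast_ne_zero.2 k.factorial_ne_zero
              have hk1 : ((k : ℝ) + 1) ≠ 0 := by positivity
              field_simp
              push_cast
              ring
  -- contraction estimate in the sup metric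
  have hTb : (0:ℝ) ≤ T - β := by linarith
  have hdist : ∀ (k : ℕ) (f g : C(Icc α T, X)),
      dist (Φ^[k] f) (Φ^[k] g) ≤ ((M * (T - β)) ^ k / k.factorial) * dist f g := by
    intro k f g
    have hc0 : (0:ℝ) ≤ (M * (T - β)) ^ k / k.factorial * dist f g :=
      mul_nonneg (div_nonneg (pow_nonneg (mul_nonneg hM0 hTb) _) (Nat.cast_nonneg _))
        dist_nonneg
    rw [ContinuousMap.dist_le hc0]
    intro t
    rw [dist_eq_norm]
    calc ‖(Φ^[k] f) t - (Φ^[k] g) t‖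
        ≤ ‖f - g‖ * (M ^ k * max (↑t - β) 0 ^ k / k.factorial) := by
          simpa using hiter k f g t
      _ ≤ ‖f - g‖ * (M ^ k * (T - β) ^ k / k.factorial) := by
          gcongr
          exact max_le (by linarith [t.2.2]) hTb
      _ = (M * (T - β)) ^ k / k.factorial * dist f g := by
          rw [dist_eq_norm, mul_pow]; ring
  obtain ⟨k, hk⟩ : ∃ k : ℕ, (M * (T - β)) ^ k / k.factorial < 1 :=
    ((FloorSemiring.tendsto_pow_div_factorial_atTop (K := ℝ)
      (M * (T - β))).eventually (gt_mem_nhds one_pos)).exists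
  have hc0 : (0:ℝ) ≤ (M * (T - β)) ^ k / k.factorial :=
    div_nonneg (pow_nonneg (mul_nonneg hM0 hTb) _) (Nat.cast_nonneg _)
  have hcontr : ContractingWith ((M * (T - β)) ^ k / k.factorial).toNNReal (Φ^[k]) := by
    constructor
    · rw [← Real.toNNReal_one]
      exact (Real.toNNReal_lt_toNNReal_iff_of_nonneg hc0).2 hk
    · refine LipschitzWith.of_dist_le_mul fun f g => ?_
      rw [Real.coe_toNNReal _ hc0]
      exact hdist k f g
  haveI : Nonempty C(Icc α T, X) := ⟨ContinuousMap.const _ 0⟩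
  set y := hcontr.fixedPoint (Φ^[k]) with hydef
  have hyfix : Φ y = y := hcontr.isFixedPt_fixedPoint_iterate
  have huniq : ∀ z : C(Icc α T, X), Φ z = z → z = y := fun z hz =>
    hcontr.fixedPoint_unique (IsFixedPt.iterate hz k)
  refine ⟨fun t => y (projIcc α T hαT t), ⟨?_, ?_, ?_⟩, ?_⟩
  · exact (y.continuous.comp continuous_projIcc).continuousOn
  · -- initial condition
    intro t ht
    beta_reduce
    have htm : t ∈ Icc α T := ⟨ht.1, ht.2.trans hβT⟩
    have h1 : y (projIcc α T hαT t) = Φ y (projIcc α T hαT t) := by rw [hyfix]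
    rw [h1, hΦ, projIcc_of_mem hαT htm]
    simp only
    rw [min_eq_left ht.2, max_eq_right ht.2, intervalIntegral.integral_same, add_zero]
  · -- integral equation
    intro t ht
    beta_reduce
    have htm : t ∈ Icc α T := ⟨hαβ.trans ht.1, ht.2⟩
    have h1 : y (projIcc α T hαT t) = Φ y (projIcc α T hαT t) := by rw [hyfix]
    rw [h1, hΦ, projIcc_of_mem hαT htm]
    simp only
    rw [min_eq_right ht.1, max_eq_left ht.1]
  · -- uniqueness
    rintro z ⟨hz1, hz2, hz3⟩ t htm
    have hcz : Continuous ((Icc α T).restrict z) := hz1.restrict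
    set zc : C(Icc α T, X) := ⟨_, hcz⟩ with hzdef
    have hfix : Φ zc = zc := by
      ext u
      rw [hΦ]
      rcases le_total (↑u : ℝ) β with hu | hu
      · rw [max_eq_right hu, intervalIntegral.integral_same, add_zero, min_eq_left hu]
        exact (hz2 ↑u ⟨u.2.1, hu⟩).symm
      · rw [min_eq_right hu, max_eq_left hu]
        have h3 : (∫ s in β..(↑u:ℝ), G zc s)
            = ∫ s in β..(↑u:ℝ), ((∑ i, p i s (z (τ i s))) + q s) := by
          refine intervalIntegral.integral_congr fun s hs => ?_
          rw [uIcc_of_le hu] at hs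
          have hsT : s ∈ Icc β T := ⟨hs.1, hs.2.trans u.2.2⟩
          simp only [hGdef]
          congr 1
          refine Finset.sum_congr rfl fun i _ => ?_
          congr 1
          show z ↑(projIcc α T hαT (τ i s)) = z (τ i s)
          rw [projIcc_of_mem hαT (hτmem i s hsT)]
        rw [h3, ← hz3 ↑u ⟨hu, u.2.2⟩]
        rfl
    have hzy := huniq zc hfix
    calc z t = zc ⟨t, htm⟩ := rfl
      _ = y ⟨t, htm⟩ := by rw [hzy]
      _ = y (projIcc α T hαT t) := by rw [projIcc_of_mem hαT htm]

/-- Global existence and uniqueness for linear delay differential equations on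
the unbounded interval `[β, ∞)` (method of steps; continuous-time case). -/
theorem linear_delay_global_existence_uniqueness_unbounded
    {X : Type*} [NormedAddCommGroup X] [NormedSpace ℝ X] [CompleteSpace X]
    {n : ℕ} (hn : 0 < n)
    {α β : ℝ} (hαβ : α ≤ β)
    (τ : Fin n → ℝ → ℝ)
    (hτc : ∀ i, ContinuousOn (τ i) (Ici β))
    (hτ : ∀ i, ∀ t ∈ Ici β, α ≤ τ i t ∧ τ i t ≤ t)
    (φ : ℝ → X) (hφ : ContinuousOn φ (Icc α β))
    (p : Fin n → ℝ → X →L[ℝ] X) (hp : ∀ i, ContinuousOn (p i) (Ici β))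
    (q : ℝ → X) (hq : ContinuousOn q (Ici β)) :
    ∃ x : ℝ → X,
      (ContinuousOn x (Ici α) ∧
        (∀ t ∈ Icc α β, x t = φ t) ∧
        (∀ t ∈ Ici β,
          HasDerivWithinAt x (∑ i, p i t (x (τ i t)) + q t) (Ici β) t)) ∧
      ∀ y : ℝ → X,
        (ContinuousOn y (Ici α) ∧
          (∀ t ∈ Icc α β, y t = φ t) ∧
          (∀ t ∈ Ici β,
            HasDerivWithinAt y (∑ i, p i t (y (τ i t)) + q t) (Ici β) t)) →
        EqOn y x (Ici α) := by
  have hβT : ∀ m : ℕ, β ≤ β + (m:ℝ) := fun m => le_add_of_nonneg_right (Nat.cast_nonneg m)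
  have hIcc : ∀ m : ℕ, Icc β (β + (m:ℝ)) ⊆ Ici β := fun m => Icc_subset_Ici_self
  have key : ∀ m : ℕ, ∃ x : ℝ → X,
      (ContinuousOn x (Icc α (β + (m:ℝ))) ∧ (∀ t ∈ Icc α β, x t = φ t) ∧
        ∀ t ∈ Icc β (β + (m:ℝ)),
          x t = φ β + ∫ s in β..t, ((∑ i, p i s (x (τ i s))) + q s)) ∧
      ∀ y : ℝ → X, (ContinuousOn y (Icc α (β + (m:ℝ))) ∧ (∀ t ∈ Icc α β, y t = φ t) ∧
        ∀ t ∈ Icc β (β + (m:ℝ)),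
          y t = φ β + ∫ s in β..t, ((∑ i, p i s (y (τ i s))) + q s)) →
        EqOn y x (Icc α (β + (m:ℝ))) := fun m =>
    delay_key hαβ (hβT m) τ (fun i => (hτc i).mono (hIcc m))
      (fun i t ht => hτ i t (hIcc m ht)) φ hφ p (fun i => (hp i).mono (hIcc m))
      q (hq.mono (hIcc m))
  choose w hw hwu using key
  have hmono : ∀ {m m' : ℕ}, m ≤ m' → EqOn (w m') (w m) (Icc α (β + (m:ℝ))) := by
    intro m m' hmm
    have hle : (β:ℝ) + m ≤ β + m' := by
      have : (m:ℝ) ≤ m' := Nat.cast_le.2 hmm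
      linarith
    exact hwu m (w m') ⟨(hw m').1.mono (Icc_subset_Icc le_rfl hle), (hw m').2.1,
      fun t ht => (hw m').2.2 t ⟨ht.1, ht.2.trans hle⟩⟩
  set x : ℝ → X := fun t => w ⌈t - β⌉₊ t with hxdef
  have hTle : ∀ t : ℝ, t ≤ β + (⌈t - β⌉₊ : ℝ) := fun t => by
    have := Nat.le_ceil (t - β); linarith
  have hagree : ∀ (m : ℕ) (t : ℝ), t ∈ Icc α (β + (m:ℝ)) → x t = w m t := by
    intro m t ht
    rcases le_total (⌈t - β⌉₊) m with h | h
    · exact (hmono h ⟨ht.1, hTle t⟩).symm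
    · exact hmono h ht
  have hxc : ContinuousOn x (Ici α) := by
    intro t ht
    set m : ℕ := ⌈t - β⌉₊ + 1 with hm
    have htlt : t < β + (m:ℝ) := by
      have := Nat.le_ceil (t - β)
      have h2 : ((⌈t - β⌉₊ : ℝ)) < m := by rw [hm]; push_cast; linarith
      linarith
    have hmem : Icc α (β + (m:ℝ)) ∈ nhdsWithin t (Ici α) := by
      rw [← Ici_inter_Iic]
      exact Filter.inter_mem self_mem_nhdsWithin
        (mem_nhdsWithin_of_mem_nhds (Iic_mem_nhds htlt))
    have h1 : ContinuousWithinAt (w m) (Ici α) t :=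
      ((hw m).1 t ⟨ht, htlt.le⟩).mono_of_mem_nhdsWithin hmem
    refine h1.congr_of_eventuallyEq ?_ (hagree m t ⟨ht, htlt.le⟩)
    exact Filter.eventuallyEq_of_mem hmem fun u hu => hagree m u hu
  have hxφ : ∀ t ∈ Icc α β, x t = φ t := by
    intro t ht
    have h0 : t ∈ Icc α (β + ((0:ℕ):ℝ)) := by simpa using ht
    rw [hagree 0 t h0]
    exact (hw 0).2.1 t ht
  have hxint : ∀ t ∈ Ici β, x t = φ β + ∫ s in β..t, ((∑ i, p i s (x (τ i s))) + q s) := by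
    intro t ht
    set m : ℕ := ⌈t - β⌉₊ with hm
    have htm : t ∈ Icc β (β + (m:ℝ)) := ⟨ht, hTle t⟩
    rw [hagree m t ⟨hαβ.trans ht, hTle t⟩, (hw m).2.2 t htm]
    congr 1
    refine intervalIntegral.integral_congr fun s hs => ?_
    rw [uIcc_of_le ht] at hs
    have hsm : s ∈ Icc β (β + (m:ℝ)) := ⟨hs.1, hs.2.trans htm.2⟩
    congr 1
    refine Finset.sum_congr rfl fun i _ => ?_
    congr 1
    have hτs : τ i s ∈ Icc α (β + (m:ℝ)) :=
      ⟨(hτ i s hs.1).1, ((hτ i s hs.1).2.trans hs.2).trans htm.2⟩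
    exact (hagree m (τ i s) hτs).symm
  have hGxc : ContinuousOn (fun s => (∑ i, p i s (x (τ i s))) + q s) (Ici β) :=
    delay_integrand_continuousOn hp hq hτc
      (fun i s hs => (hτ i s hs).1) hxc
  have hxderiv : ∀ t ∈ Ici β,
      HasDerivWithinAt x ((∑ i, p i t (x (τ i t))) + q t) (Ici β) t := by
    intro t ht
    set Gx : ℝ → X := fun s => (∑ i, p i s (x (τ i s))) + q s with hGxdef
    have hprim : HasDerivWithinAt (fun u => φ β + ∫ s in β..u, Gx s) (Gx t) (Ici β) t := by
      rcases eq_or_lt_of_le (mem_Ici.1 ht) with heq | hlt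
      · subst heq
        refine HasDerivWithinAt.const_add _ ?_
        exact intervalIntegral.integral_hasDerivWithinAt_right
          (by apply ContinuousOn.intervalIntegrable; rw [uIcc_self];
              exact hGxc.mono (singleton_subset_iff.2 self_mem_Ici))
          ⟨Ici β, Filter.mem_of_superset self_mem_nhdsWithin Ioi_subset_Ici_self,
            hGxc.aestronglyMeasurable measurableSet_Ici⟩
          ((hGxc β self_mem_Ici).mono Ioi_subset_Ici_self)
      · have hnhds : Ici β ∈ nhds t :=
          Filter.mem_of_superset (isOpen_Ioi.mem_nhds hlt) Ioi_subset_Ici_self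
        have hf : IntervalIntegrable Gx volume β t := by
          apply ContinuousOn.intervalIntegrable
          rw [uIcc_of_le ht]
          exact hGxc.mono Icc_subset_Ici_self
        have hd : HasDerivAt (fun u => ∫ s in β..u, Gx s) (Gx t) t :=
          intervalIntegral.integral_hasDerivAt_right hf
            ⟨Ici β, hnhds, hGxc.aestronglyMeasurable measurableSet_Ici⟩
            (hGxc.continuousAt hnhds)
        exact (hd.hasDerivWithinAt).const_add _
    exact hprim.congr (fun u hu => hxint u hu) (hxint t ht)
  refine ⟨x, ⟨hxc, hxφ, fun t ht => hxderiv t ht⟩, ?_⟩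
  rintro y ⟨hyc, hyφ, hyD⟩ t ht
  set m : ℕ := ⌈t - β⌉₊ with hm
  have hGyc : ContinuousOn (fun s => (∑ i, p i s (y (τ i s))) + q s) (Ici β) :=
    delay_integrand_continuousOn hp hq hτc (fun i s hs => (hτ i s hs).1) hyc
  have hyint : ∀ u ∈ Icc β (β + (m:ℝ)),
      y u = φ β + ∫ s in β..u, ((∑ i, p i s (y (τ i s))) + q s) := by
    intro u hu
    have heq := intervalIntegral.integral_eq_sub_of_hasDeriv_right_of_le hu.1
      (hyc.mono fun r hr => hαβ.trans hr.1)
      (fun s hs => (hyD s hs.1.le).mono fun r hr => (hs.1.trans hr).le)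
      (by
        apply ContinuousOn.intervalIntegrable
        rw [uIcc_of_le hu.1]
        exact hGyc.mono Icc_subset_Ici_self)
    have hyβ : y β = φ β := hyφ β ⟨hαβ, le_rfl⟩
    rw [heq, hyβ]
    abel
  have h1 : EqOn y (w m) (Icc α (β + (m:ℝ))) :=
    hwu m y ⟨hyc.mono Icc_subset_Ici_self, hyφ, hyint⟩
  exact (h1 ⟨ht, hTle t⟩).trans (hagree m t ⟨ht, hTle t⟩).symm
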